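/- Let A ∈ ℝ^{ℓ×n} be a matrix such that the image A(ℝ₊ⁿ) of the nonnegative orthant equals the full image im(A) (i.e., A(ℝ₊ⁿ) is a vector subspace). If A ≠ 0, then there exists a nonzero vector λ ∈ ℝ₊ⁿ with Aλ = 0. -/
import Mathlib


/-- If A(ℝ₊ⁿ) = im(A) (the image of the nonnegative orthant is the full image)
and A ≠ 0, then there is a nonzero λ ≥ 0 with Aλ = 0. -/
theorem exists_nonneg_kernel_vector {ℓ n : ℕ} (A : Matrix (Fin ℓ) (Fin n) ℝ)
    (h : A.mulVec '' {x | ∀ j, 0 ≤ x j} = Set.range A.mulVec) (hA : A ≠ 0) :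
    ∃ lam : Fin n → ℝ, lam ≠ 0 ∧ (∀ j, 0 ≤ lam j) ∧ A.mulVec lam = 0 := by
  have hn : 0 < n := by
    rcases Nat.eq_zero_or_pos n with h0 | h0
    · exact absurd (by subst h0; ext i j; exact j.elim0) hA
    · exact h0
  have hy : A.mulVec (fun _ => (-1 : ℝ)) ∈ Set.range A.mulVec := ⟨_, rfl⟩
  rw [← h] at hy
  obtain ⟨x, hx, hxy⟩ := hy
  refine ⟨x + fun _ => 1, ?_, ?_, ?_⟩
  · intro hzero
    have := congrFun hzero ⟨0, hn⟩
    simp only [Pi.add_apply, Pi.zero_apply] at this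
    have hx0 := hx ⟨0, hn⟩
    linarith
  · intro j
    have := hx j
    simp only [Pi.add_apply]
    linarith
  · have : A.mulVec (x + fun _ => 1) = A.mulVec x + A.mulVec (fun _ => 1) := by
      rw [Matrix.mulVec_add]
    rw [this, hxy]
    have : A.mulVec (fun _ => (-1 : ℝ)) = - A.mulVec (fun _ => 1) := by
      rw [← Matrix.mulVec_neg]; congr 1
    rw [this]; simp
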